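/- Let G be an orientable loopless 2-vertex embedding scheme (all edge signatures positive) with no non-trivial block and nonzero Euler genus. Adding one negative edge e parallel and consecutive to an existing edge f (appearing as e,f at one vertex and f,e at the other) yields a non-orientable scheme G' with the same number of faces as G, hence with eg(G') = eg(G) + 1 and non-orientable genus g(G') = eg(G) + 1 = g(G); moreover G' has no non-trivial block. -/

import Mathlib

/-- A signed permutation of length `n` (positions `Fin n`, each carrying a value in
`Fin n` and a sign; `true` = positive). It encodes a loopless 2-vertex embedding scheme. -/
abbrev SP (n : ℕ) := Fin n → Fin n × Bool

/-- `π` is a genuine signed permutation: the value map is a bijection. -/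
def IsSP {n : ℕ} (π : SP n) : Prop := Function.Bijective fun k => (π k).1

/-- The index map of the reversal of the interval `(i, j)`. -/
def revIdx {n : ℕ} (i j k : Fin n) : Fin n :=
  if h : i.val ≤ k.val ∧ k.val ≤ j.val then
    ⟨i.val + j.val - k.val, by have := j.isLt; omega⟩
  else k

/-- The reversal of the interval `(i, j)`: reverses the order of the entries in
positions `i, …, j` and flips their signs. -/
def reversal {n : ℕ} (i j : Fin n) (π : SP n) : SP n := fun k =>
  if i.val ≤ k.val ∧ k.val ≤ j.val then
    ((π (revIdx i j k)).1, !(π (revIdx i j k)).2)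
  else π k

/-- Apply a sequence of reversals. -/
def applySeq {n : ℕ} (L : List (Fin n × Fin n)) (π : SP n) : SP n :=
  L.foldl (fun σ x => reversal x.1 x.2 σ) π

/-- The identity signed permutation: increasing order, all signs positive. -/
def idSP (n : ℕ) : SP n := fun k => (k, true)

/-- The position of the edge (element) labelled `e` in `π`. -/
noncomputable def epos {n : ℕ} (π : SP n) (e : Fin n) : Fin n :=
  if h : ∃ p, (π p).1 = e then h.choose else e

/-- The sign (signature) of the edge labelled `e`. -/
noncomputable def sgnE {n : ℕ} (π : SP n) (e : Fin n) : Bool := (π (epos π e)).2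

/-- One step of face tracing in the 2-vertex embedding scheme encoded by `π`.
States are (edge just traversed, endpoint arrived at, local orientation); at a vertex
we move to the next edge in the rotation (direction given by the orientation) and
traverse it, flipping the orientation iff its signature is negative. -/
noncomputable def faceStep {n : ℕ} (π : SP n) :
    Fin n × Bool × Bool → Fin n × Bool × Bool := fun s =>
  let e' :=
    if s.2.1 then
      (if s.2.2 then (π (finRotate n (epos π s.1))).1
       else (π ((finRotate n).symm (epos π s.1))).1)
    else
      (if s.2.2 then finRotate n s.1 else (finRotate n).symm s.1)
  (e', !s.2.1, Bool.xor s.2.2 (!(sgnE π e')))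

/-- The number of facial cycles of the scheme encoded by `π` (each face is traced
twice, once per orientation). -/
noncomputable def numFaces {n : ℕ} (π : SP n) : ℕ :=
  Nat.card (Quot fun x y : Fin n × Bool × Bool => y = faceStep π x) / 2

/-- The Euler genus of the scheme encoded by `π`: `2 - v + e - f` with `v = 2`. -/
noncomputable def eulerGenus {n : ℕ} (π : SP n) : ℤ :=
  (n : ℤ) - numFaces π

open Classical in
/-- The non-orientable genus: equals the Euler genus for non-orientable schemes,
`0` for planar orientable schemes, and Euler genus `+ 1` otherwise. -/
noncomputable def nonOrientGenus {n : ℕ} (π : SP n) : ℤ :=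
  if ∃ p, (π p).2 = false then eulerGenus π
  else if eulerGenus π = 0 then 0 else eulerGenus π + 1

/-- Positions `a ≤ b` delimit a positive block: all signs positive, increasing frames,
and the values in the interval are exactly the integer interval `[(π a).1, (π b).1]`. -/
def IsPosBlock {n : ℕ} (π : SP n) (a b : Fin n) : Prop :=
  a ≤ b ∧ (∀ k, a ≤ k → k ≤ b → (π k).2 = true) ∧
    (π a).1 < (π b).1 ∧
    (∀ k, a ≤ k → k ≤ b → (π a).1 ≤ (π k).1 ∧ (π k).1 ≤ (π b).1) ∧
    ∀ m : Fin n, (π a).1 ≤ m → m ≤ (π b).1 → ∃ p, a ≤ p ∧ p ≤ b ∧ (π p).1 = m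

/-- Positions `a ≤ b` delimit a negative block: all signs negative, decreasing frames,
and the values are exactly the integer interval `[(π b).1, (π a).1]`. -/
def IsNegBlock {n : ℕ} (π : SP n) (a b : Fin n) : Prop :=
  a ≤ b ∧ (∀ k, a ≤ k → k ≤ b → (π k).2 = false) ∧
    (π b).1 < (π a).1 ∧
    (∀ k, a ≤ k → k ≤ b → (π b).1 ≤ (π k).1 ∧ (π k).1 ≤ (π a).1) ∧
    ∀ m : Fin n, (π b).1 ≤ m → m ≤ (π a).1 → ∃ p, a ≤ p ∧ p ≤ b ∧ (π p).1 = m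

/-- A positive block is sorted (trivial) if its entries increase one by one. -/
def PosBlockSorted {n : ℕ} (π : SP n) (a b : Fin n) : Prop :=
  ∀ k : Fin n, a ≤ k → k ≤ b → ((π k).1 : ℕ) = (π a).1 + (k.val - a.val)

/-- A negative block is sorted (trivial) if its entries decrease one by one. -/
def NegBlockSorted {n : ℕ} (π : SP n) (a b : Fin n) : Prop :=
  ∀ k : Fin n, a ≤ k → k ≤ b → ((π k).1 : ℕ) = (π a).1 - (k.val - a.val)

/-- `π` contains a non-trivial (unsorted) block. -/
def HasNontrivialBlock {n : ℕ} (π : SP n) : Prop :=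
  ∃ a b : Fin n, (IsPosBlock π a b ∧ ¬ PosBlockSorted π a b) ∨
    (IsNegBlock π a b ∧ ¬ NegBlockSorted π a b)

/-- Lift the old edge labels to `Fin (n+1)`, making room for the new label
`(π p).1 + 1` right after the label of the edge `f = (π p).1`. -/
def liftVal {n : ℕ} (π : SP n) (p : Fin n) (v : Fin n) : Fin (n + 1) :=
  if v.val ≤ (π p).1.val then ⟨v.val, by have := v.isLt; omega⟩
  else ⟨v.val + 1, by have := v.isLt; omega⟩

/-- Add a negative edge `e` parallel and consecutive to the edge `f` occupying
position `p`: at the vertex with identity rotation the new edge follows `f`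
(labels `f, e`), at the other vertex it precedes `f` (order `e, f`). -/
def addEdge {n : ℕ} (π : SP n) (p : Fin n) : SP (n + 1) := fun q =>
  if h1 : q.val < p.val then
    (liftVal π p (π ⟨q.val, by have := p.isLt; omega⟩).1,
     (π ⟨q.val, by have := p.isLt; omega⟩).2)
  else if h2 : q.val = p.val then
    (⟨(π p).1.val + 1, by have := (π p).1.isLt; omega⟩, false)
  else
    (liftVal π p (π ⟨q.val - 1, by have := q.isLt; omega⟩).1,
     (π ⟨q.val - 1, by have := q.isLt; omega⟩).2)


namespace AE

lemma epos_eq {n : ℕ} (π : SP n) (hinj : Function.Injective fun k => (π k).1)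
    (q : Fin n) : epos π ((π q).1) = q := by
  have h : ∃ r, (π r).1 = (π q).1 := ⟨q, rfl⟩
  rw [epos, dif_pos h]
  exact hinj (h.choose_spec : (π h.choose).1 = (π q).1)

lemma rot_val {m : ℕ} (k : Fin (m+1)) :
    (finRotate (m+1) k).1 = if k.1 = m then 0 else k.1 + 1 := by
  rw [finRotate_succ_apply, Fin.add_def]
  have hk := k.isLt
  simp only [Fin.val_one']
  rcases Nat.eq_zero_or_pos m with h | h
  · subst h; split_ifs <;> omega
  · rw [Nat.mod_eq_of_lt (show 1 < m + 1 by omega)]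
    split_ifs with h1
    · simp [h1, Nat.mod_self]
    · rw [Nat.mod_eq_of_lt (by omega)]

lemma rot_symm_val {m : ℕ} (k : Fin (m+1)) :
    ((finRotate (m+1)).symm k).1 = if k.1 = 0 then m else k.1 - 1 := by
  have hk := k.isLt
  have : (finRotate (m+1)).symm k = ⟨if k.1 = 0 then m else k.1 - 1, by split <;> omega⟩ := by
    rw [Equiv.symm_apply_eq]
    apply Fin.ext
    rw [rot_val]
    simp only
    split_ifs <;> first | exact (False.elim ‹False›) | omega
  rw [this]

section Main

variable {m : ℕ} (π : SP (m+1)) (p : Fin (m+1))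

/-- the new (negative) edge label -/
def nl : Fin (m+2) := ⟨(π p).1.1 + 1, by have := (π p).1.isLt; omega⟩
/-- the position of the new edge in the new scheme -/
def pF : Fin (m+2) := ⟨p.1, by have := p.isLt; omega⟩
/-- old position to new position -/
def posLift (q : Fin (m+1)) : Fin (m+2) :=
  if q.1 < p.1 then ⟨q.1, by have := q.isLt; omega⟩ else ⟨q.1+1, by have := q.isLt; omega⟩
/-- old state to new state -/
def liftS : Fin (m+1) × Bool × Bool → Fin (m+2) × Bool × Bool :=
  fun s => (liftVal π p s.1, s.2)

lemma liftVal_lt (v : Fin (m+1)) : (liftVal π p v).1 = if v.1 ≤ (π p).1.1 then v.1 else v.1 + 1 := by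
  rw [liftVal]; split <;> rfl

lemma liftVal_ne_nl (v : Fin (m+1)) : liftVal π p v ≠ nl π p := by
  intro h
  have hv := v.isLt
  have := congrArg Fin.val h
  rw [liftVal_lt] at this
  simp only [nl] at this
  split_ifs at this <;> omega

lemma liftVal_inj : Function.Injective (liftVal π p) := by
  intro u v h
  have := congrArg Fin.val h
  rw [liftVal_lt, liftVal_lt] at this
  apply Fin.ext
  split_ifs at this <;> omega

lemma posLift_inj : Function.Injective (posLift p) := by
  intro u v h
  simp only [posLift] at h
  split_ifs at h <;>
    (apply Fin.ext; have := congrArg Fin.val h; simp only [] at this; omega)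

lemma addEdge_pF : addEdge π p (pF p) = (nl π p, false) := by
  simp [addEdge, pF, nl]

lemma addEdge_posLift (q : Fin (m+1)) :
    addEdge π p (posLift p q) = (liftVal π p (π q).1, (π q).2) := by
  rcases Nat.lt_or_ge q.1 p.1 with h | h
  · have : posLift p q = ⟨q.1, by have := q.isLt; omega⟩ := by simp [posLift, h]
    rw [this, addEdge]
    rw [dif_pos h]
  · have : posLift p q = ⟨q.1+1, by have := q.isLt; omega⟩ := by
      simp [posLift]; omega
    rw [this, addEdge]
    rw [dif_neg (by simp; omega), dif_neg (by simp; omega)]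
    simp

lemma posLift_cover (q' : Fin (m+2)) : q' = pF p ∨ ∃ q, q' = posLift p q := by
  rcases Nat.lt_trichotomy q'.1 p.1 with h | h | h
  · right; exact ⟨⟨q'.1, by omega⟩, by simp [posLift, h]⟩
  · left; exact Fin.ext h
  · right
    refine ⟨⟨q'.1 - 1, by have := q'.isLt; omega⟩, ?_⟩
    simp only [posLift]
    rw [if_neg (by simp; omega)]
    apply Fin.ext; simp; omega

lemma addEdge_inj (hπ : IsSP π) : Function.Injective fun q => (addEdge π p q).1 := by
  intro q1 q2 h
  simp only at h
  rcases posLift_cover p q1 with h1 | ⟨r1, rfl⟩ <;> rcases posLift_cover p q2 with h2 | ⟨r2, rfl⟩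
  · rw [h1, h2]
  · subst h1
    rw [addEdge_pF, addEdge_posLift] at h
    exact absurd h.symm (liftVal_ne_nl π p _)
  · subst h2
    rw [addEdge_pF, addEdge_posLift] at h
    exact absurd h (liftVal_ne_nl π p _)
  · rw [addEdge_posLift, addEdge_posLift] at h
    exact congrArg _ (hπ.1 (liftVal_inj π p h))

lemma epos_addEdge_nl (hπ : IsSP π) : epos (addEdge π p) (nl π p) = pF p := by
  have := epos_eq (addEdge π p) (addEdge_inj π p hπ) (pF p)
  rwa [addEdge_pF] at this

lemma epos_addEdge_lift (hπ : IsSP π) (e : Fin (m+1)) :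
    epos (addEdge π p) (liftVal π p e) = posLift p (epos π e) := by
  obtain ⟨q, rfl⟩ := hπ.2 e
  have h1 := epos_eq (addEdge π p) (addEdge_inj π p hπ) (posLift p q)
  rw [addEdge_posLift] at h1
  rw [h1, epos_eq π hπ.1]

lemma sgnE_all (hall : ∀ q, (π q).2 = true) (e : Fin (m+1)) : sgnE π e = true := hall _

lemma sgnE_addEdge_nl (hπ : IsSP π) : sgnE (addEdge π p) (nl π p) = false := by
  rw [sgnE, epos_addEdge_nl π p hπ, addEdge_pF]

lemma sgnE_addEdge_lift (hπ : IsSP π ) (hall : ∀ q, (π q).2 = true) (e : Fin (m+1)) : sgnE (addEdge π p) (liftVal π p e) = true := by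
  rw [sgnE, epos_addEdge_lift π p hπ, addEdge_posLift]
  exact hall _


lemma rot_val' {m : ℕ} (k : Fin (m+2)) :
    (finRotate (m+2) k).1 = if k.1 = m+1 then 0 else k.1 + 1 := rot_val (m := m+1) k

lemma rot_symm_val' {m : ℕ} (k : Fin (m+2)) :
    ((finRotate (m+2)).symm k).1 = if k.1 = 0 then m+1 else k.1 - 1 := rot_symm_val (m := m+1) k

/-- the state `a` = (f, T, F) -/
def stA : Fin (m+1) × Bool × Bool := ((π p).1, true, false)
/-- the state `b` = (f, F, T) -/
def stB : Fin (m+1) × Bool × Bool := ((π p).1, false, true)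
/-- the label before f at vertex 1 -/
def gLab : Fin (m+1) := (π ((finRotate (m+1)).symm p)).1
/-- image of stA -/
def FA : Fin (m+1) × Bool × Bool := (gLab π p, false, false)
/-- image of stB -/
def FB : Fin (m+1) × Bool × Bool := (finRotate (m+1) (π p).1, true, true)

lemma posLift_val (q : Fin (m+1)) : (posLift p q).1 = if q.1 < p.1 then q.1 else q.1 + 1 := by
  rw [posLift]; split <;> rfl

lemma nl_val : (nl π p).1 = (π p).1.1 + 1 := rfl
lemma pF_val : (pF p).1 = p.1 := rfl

lemma P1 : finRotate (m+2) (liftVal π p (π p).1) = nl π p := by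
  have h1 := (π p).1.isLt
  apply Fin.ext
  simp only [rot_val', rot_symm_val', posLift_val, liftVal_lt, nl_val, pF_val, rot_val,
    rot_symm_val]
  split_ifs <;> first | exact (False.elim ‹False›) | omega

lemma P1' (e : Fin (m+1)) (he : e ≠ (π p).1) :
    finRotate (m+2) (liftVal π p e) = liftVal π p (finRotate (m+1) e) := by
  have h1 := (π p).1.isLt
  have h2 := e.isLt
  have h3 : e.1 ≠ (π p).1.1 := fun h => he (Fin.ext h)
  apply Fin.ext
  simp only [rot_val', rot_symm_val', posLift_val, liftVal_lt, nl_val, pF_val, rot_val,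
    rot_symm_val]
  split_ifs <;> first | exact (False.elim ‹False›) | omega

lemma P2a : (finRotate (m+2)).symm (liftVal π p (finRotate (m+1) (π p).1)) = nl π p := by
  have h1 := (π p).1.isLt
  apply Fin.ext
  simp only [rot_val', rot_symm_val', posLift_val, liftVal_lt, nl_val, pF_val, rot_val,
    rot_symm_val]
  split_ifs <;> first | exact (False.elim ‹False›) | omega

lemma P2b (e : Fin (m+1)) (he : (finRotate (m+1)).symm e ≠ (π p).1) :
    (finRotate (m+2)).symm (liftVal π p e) = liftVal π p ((finRotate (m+1)).symm e) := by
  have h1 := (π p).1.isLt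
  have h2 := e.isLt
  have h3 : ((finRotate (m+1)).symm e).1 ≠ (π p).1.1 := fun h => he (Fin.ext h)
  simp only [rot_symm_val] at h3
  apply Fin.ext
  simp only [rot_val', rot_symm_val', posLift_val, liftVal_lt, nl_val, pF_val, rot_val,
    rot_symm_val]
  split_ifs at h3 ⊢ <;> first | exact (False.elim ‹False›) | omega

lemma P3a : finRotate (m+2) (posLift p ((finRotate (m+1)).symm p)) = pF p := by
  have h1 := p.isLt
  apply Fin.ext
  simp only [rot_val', rot_symm_val', posLift_val, liftVal_lt, nl_val, pF_val, rot_val,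
    rot_symm_val]
  split_ifs <;> first | exact (False.elim ‹False›) | omega

lemma P3b (q : Fin (m+1)) (hq : finRotate (m+1) q ≠ p) :
    finRotate (m+2) (posLift p q) = posLift p (finRotate (m+1) q) := by
  have h1 := p.isLt
  have h2 := q.isLt
  have h3 : (finRotate (m+1) q).1 ≠ p.1 := fun h => hq (Fin.ext h)
  simp only [rot_val] at h3
  apply Fin.ext
  simp only [rot_val', rot_symm_val', posLift_val, liftVal_lt, nl_val, pF_val, rot_val,
    rot_symm_val]
  split_ifs at h3 ⊢ <;> first | exact (False.elim ‹False›) | omega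

lemma P4a : (finRotate (m+2)).symm (posLift p p) = pF p := by
  have h1 := p.isLt
  apply Fin.ext
  simp only [rot_val', rot_symm_val', posLift_val, liftVal_lt, nl_val, pF_val, rot_val,
    rot_symm_val]
  split_ifs <;> first | exact (False.elim ‹False›) | omega

lemma P4b (q : Fin (m+1)) (hq : q ≠ p) :
    (finRotate (m+2)).symm (posLift p q) = posLift p ((finRotate (m+1)).symm q) := by
  have h1 := p.isLt
  have h2 := q.isLt
  have h3 : q.1 ≠ p.1 := fun h => hq (Fin.ext h)
  apply Fin.ext
  simp only [rot_val', rot_symm_val', posLift_val, liftVal_lt, nl_val, pF_val, rot_val,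
    rot_symm_val]
  split_ifs <;> first | exact (False.elim ‹False›) | omega

lemma P5 : finRotate (m+2) (pF p) = posLift p p := by
  have h1 := p.isLt
  apply Fin.ext
  simp only [rot_val', rot_symm_val', posLift_val, liftVal_lt, nl_val, pF_val, rot_val,
    rot_symm_val]
  split_ifs <;> simp_all

lemma P6 : (finRotate (m+2)).symm (pF p) = posLift p ((finRotate (m+1)).symm p) := by
  have h1 := p.isLt
  apply Fin.ext
  simp only [rot_val', rot_symm_val', posLift_val, liftVal_lt, nl_val, pF_val, rot_val,
    rot_symm_val]
  split_ifs <;> simp_all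

lemma P7 : (finRotate (m+2)).symm (nl π p) = liftVal π p (π p).1 := by
  have h1 := (π p).1.isLt
  apply Fin.ext
  simp only [rot_val', rot_symm_val', posLift_val, liftVal_lt, nl_val, pF_val, rot_val,
    rot_symm_val]
  split_ifs <;> first | exact (False.elim ‹False›) | omega

lemma P8 : finRotate (m+2) (nl π p) = liftVal π p (finRotate (m+1) (π p).1) := by
  have h1 := (π p).1.isLt
  apply Fin.ext
  simp only [rot_val', rot_symm_val', posLift_val, liftVal_lt, nl_val, pF_val, rot_val,
    rot_symm_val]
  split_ifs <;> simp_all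

lemma FS1 (hall : ∀ q, (π q).2 = true) (e : Fin (m+1)) :
    faceStep π (e, false, true) = (finRotate (m+1) e, true, true) := by
  simp only [faceStep, sgnE, hall]
  rfl

lemma FS2 (hall : ∀ q, (π q).2 = true) (e : Fin (m+1)) :
    faceStep π (e, false, false) = ((finRotate (m+1)).symm e, true, false) := by
  simp only [faceStep, sgnE, hall]
  rfl

lemma FS3 (hall : ∀ q, (π q).2 = true) (e : Fin (m+1)) :
    faceStep π (e, true, true) = ((π (finRotate (m+1) (epos π e))).1, false, true) := by
  simp only [faceStep, sgnE, hall]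
  rfl

lemma FS4 (hall : ∀ q, (π q).2 = true) (e : Fin (m+1)) :
    faceStep π (e, true, false) = ((π ((finRotate (m+1)).symm (epos π e))).1, false, false) := by
  simp only [faceStep, sgnE, hall]
  rfl

lemma faceStep_stA (hπ : IsSP π) (hall : ∀ q, (π q).2 = true) :
    faceStep π (stA π p) = FA π p := by
  rw [stA, FS4 π hall, epos_eq π hπ.1 p]
  rfl

lemma faceStep_stB (hall : ∀ q, (π q).2 = true) :
    faceStep π (stB π p) = FB π p := by
  rw [stB, FS1 π hall]
  rfl

lemma val_cover (x : Fin (m+2)) : x = nl π p ∨ ∃ e, x = liftVal π p e := by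
  have hf := (π p).1.isLt
  have hx := x.isLt
  rcases Nat.lt_trichotomy x.1 ((π p).1.1 + 1) with h | h | h
  · right
    refine ⟨⟨x.1, by omega⟩, ?_⟩
    apply Fin.ext
    rw [liftVal_lt]
    simp only []
    split_ifs <;> omega
  · left; exact Fin.ext h
  · right
    refine ⟨⟨x.1 - 1, by omega⟩, ?_⟩
    apply Fin.ext
    rw [liftVal_lt]
    simp only []
    split_ifs <;> omega

/-- evaluation of new faceStep on the four new-edge states -/
lemma N1 (hπ : IsSP π) (hall : ∀ q, (π q).2 = true) :
    faceStep (addEdge π p) (nl π p, true, true) = liftS π p (stB π p) := by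
  have h1 : finRotate (m+1+1) (epos (addEdge π p) (nl π p)) = posLift p p := by
    rw [epos_addEdge_nl π p hπ]; exact P5 p
  simp [faceStep, h1, addEdge_posLift, sgnE_addEdge_lift π p hπ hall, liftS, stB]

lemma N2 (hπ : IsSP π) (hall : ∀ q, (π q).2 = true) :
    faceStep (addEdge π p) (nl π p, true, false) = liftS π p (FA π p) := by
  have h1 : (finRotate (m+1+1)).symm (epos (addEdge π p) (nl π p)) =
      posLift p ((finRotate (m+1)).symm p) := by
    rw [epos_addEdge_nl π p hπ]; exact P6 p
  simp [faceStep, h1, addEdge_posLift, sgnE_addEdge_lift π p hπ hall, liftS, FA, gLab]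

lemma N3 (hπ : IsSP π) (hall : ∀ q, (π q).2 = true) :
    faceStep (addEdge π p) (nl π p, false, false) = liftS π p (stA π p) := by
  have h1 : (finRotate (m+1+1)).symm (nl π p) = liftVal π p (π p).1 := P7 π p
  simp [faceStep, h1, sgnE_addEdge_lift π p hπ hall, liftS, stA]

lemma N4 (hπ : IsSP π) (hall : ∀ q, (π q).2 = true) :
    faceStep (addEdge π p) (nl π p, false, true) = liftS π p (FB π p) := by
  have h1 : finRotate (m+1+1) (nl π p) = liftVal π p (finRotate (m+1) (π p).1) := P8 π p
  simp [faceStep, h1, sgnE_addEdge_lift π p hπ hall, liftS, FB]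

/-- master evaluation of new faceStep on lifted states -/
lemma L1 (hπ : IsSP π) (hall : ∀ q, (π q).2 = true)
    (s : Fin (m+1) × Bool × Bool) :
    faceStep (addEdge π p) (liftS π p s) =
      if s = stB π p then (nl π p, true, false)
      else if s = stA π p then (nl π p, false, true)
      else if faceStep π s = stA π p then (nl π p, true, true)
      else if faceStep π s = stB π p then (nl π p, false, false)
      else liftS π p (faceStep π s) := by
  obtain ⟨e, v, o⟩ := s
  have hsur : (π (epos π e)).1 = e := by
    obtain ⟨q, rfl⟩ := hπ.2 e
    rw [epos_eq π hπ.1]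
  rcases v <;> rcases o
  · -- (e, false, false) : relevant condition c3 : (finRotate (m+1)).symm e = f
    rw [FS2 π hall]
    split_ifs with c1 c2 c3 c4
    · exact absurd c1 (by simp [stB])
    · exact absurd c2 (by simp [stA])
    · have h : (finRotate (m+1)).symm e = (π p).1 := by
        have := congrArg Prod.fst c3
        simpa [stA] using this
      have h1 : (finRotate (m+1+1)).symm (liftVal π p e) = nl π p := by
        have he : e = finRotate (m+1) (π p).1 := by rw [← h, Equiv.apply_symm_apply]
        rw [he]; exact P2a π p
      simp [liftS, faceStep, h1, sgnE_addEdge_nl π p hπ]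
    · exact absurd c4 (by simp [stB])
    · have h : (finRotate (m+1)).symm e ≠ (π p).1 := fun hh => c3 (by simp [stA, hh])
      have h1 : (finRotate (m+1+1)).symm (liftVal π p e) =
          liftVal π p ((finRotate (m+1)).symm e) := P2b π p e h
      simp [liftS, faceStep, h1, sgnE_addEdge_lift π p hπ hall]
  · -- (e, false, true) : relevant condition c1 : e = f  (s = stB)
    rw [FS1 π hall]
    split_ifs with c1 c2 c3 c4
    · have h : e = (π p).1 := by
        have := congrArg Prod.fst c1
        simpa [stB] using this
      have h1 : finRotate (m+1+1) (liftVal π p e) = nl π p := by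
        rw [h]; exact P1 π p
      simp [liftS, faceStep, h1, sgnE_addEdge_nl π p hπ]
    · exact absurd c2 (by simp [stA])
    · exact absurd c3 (by simp [stA])
    · exact absurd c4 (by simp [stB])
    · have h : e ≠ (π p).1 := fun hh => c1 (by simp [stB, hh])
      have h1 : finRotate (m+1+1) (liftVal π p e) =
          liftVal π p (finRotate (m+1) e) := P1' π p e h
      simp [liftS, faceStep, h1, sgnE_addEdge_lift π p hπ hall]
  · -- (e, true, false) : relevant condition c2 : e = f  (s = stA)
    rw [FS4 π hall]
    split_ifs with c1 c2 c3 c4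
    · exact absurd c1 (by simp [stB])
    · have h : e = (π p).1 := by
        have := congrArg Prod.fst c2
        simpa [stA] using this
      have he : epos π e = p := by rw [h, epos_eq π hπ.1]
      have h1 : (finRotate (m+1+1)).symm (epos (addEdge π p) (liftVal π p e)) = pF p := by
        rw [epos_addEdge_lift π p hπ, he]; exact P4a p
      simp [liftS, faceStep, h1, addEdge_pF, sgnE_addEdge_nl π p hπ]
    · exact absurd c3 (by simp [stA])
    · exact absurd c4 (by simp [stB])
    · have h : e ≠ (π p).1 := fun hh => c2 (by simp [stA, hh])
      have he : epos π e ≠ p := fun hh => h (by rw [← hsur, hh])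
      have h1 : (finRotate (m+1+1)).symm (epos (addEdge π p) (liftVal π p e)) =
          posLift p ((finRotate (m+1)).symm (epos π e)) := by
        rw [epos_addEdge_lift π p hπ]; exact P4b p _ he
      simp [liftS, faceStep, h1, addEdge_posLift, sgnE_addEdge_lift π p hπ hall]
  · -- (e, true, true) : relevant condition c4 : finRotate (m+1) (epos π e) = p
    rw [FS3 π hall]
    split_ifs with c1 c2 c3 c4
    · exact absurd c1 (by simp [stB])
    · exact absurd c2 (by simp [stA])
    · exact absurd c3 (by simp [stA])
    · have h : finRotate (m+1) (epos π e) = p := by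
        have := congrArg Prod.fst c4
        simp only [stB] at this
        exact hπ.1 this
      have he : epos π e = (finRotate (m+1)).symm p := by
        rw [← h, Equiv.symm_apply_apply]
      have h1 : finRotate (m+1+1) (epos (addEdge π p) (liftVal π p e)) = pF p := by
        rw [epos_addEdge_lift π p hπ, he]; exact P3a p
      simp [liftS, faceStep, h1, addEdge_pF, sgnE_addEdge_nl π p hπ]
    · have h : finRotate (m+1) (epos π e) ≠ p := fun hh => c4 (by rw [hh]; simp [stB])
      have h1 : finRotate (m+1+1) (epos (addEdge π p) (liftVal π p e)) =
          posLift p (finRotate (m+1) (epos π e)) := by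
        rw [epos_addEdge_lift π p hπ]; exact P3b p _ h
      simp [liftS, faceStep, h1, addEdge_posLift, sgnE_addEdge_lift π p hπ hall]

def unlift (x : Fin (m+1+1)) : Fin (m+1) :=
  if h : x.1 ≤ (π p).1.1 then ⟨x.1, by have := (π p).1.isLt; omega⟩
  else ⟨x.1 - 1, by have := x.isLt; omega⟩

lemma unlift_lift (e : Fin (m+1)) : unlift π p (liftVal π p e) = e := by
  have h1 := (π p).1.isLt
  have h2 := e.isLt
  apply Fin.ext
  rw [unlift]
  split_ifs with h3 <;>
    (dsimp only; rw [liftVal_lt] at h3 ⊢;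
     split_ifs at h3 ⊢ <;> first | exact (False.elim ‹False›) | omega)

/-- collapse map from new states to old states -/
def Phi : Fin (m+1+1) × Bool × Bool → Fin (m+1) × Bool × Bool := fun s' =>
  if s'.1 = nl π p then
    (if s'.2.1 then (if s'.2.2 then stA π p else FA π p)
     else (if s'.2.2 then FB π p else stB π p))
  else
    (if (unlift π p s'.1, s'.2) = stA π p then stB π p
     else if (unlift π p s'.1, s'.2) = stB π p then stA π p
     else (unlift π p s'.1, s'.2))

/-- section map from old states to new states -/
def Psi : Fin (m+1) × Bool × Bool → Fin (m+1+1) × Bool × Bool := fun s =>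
  if s = stA π p then (nl π p, true, true)
  else if s = stB π p then (nl π p, false, false)
  else liftS π p s

lemma stA_ne_stB : stA π p ≠ stB π p := by simp [stA, stB]
lemma FA_ne_stA : FA π p ≠ stA π p := by simp [FA, stA]
lemma FA_ne_stB : FA π p ≠ stB π p := by simp [FA, stB]
lemma FB_ne_stA : FB π p ≠ stA π p := by simp [FB, stA]
lemma FB_ne_stB : FB π p ≠ stB π p := by simp [FB, stB]

lemma Phi_lift (s : Fin (m+1) × Bool × Bool) :
    Phi π p (liftS π p s) =
      if s = stA π p then stB π p else if s = stB π p then stA π p else s := by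
  simp only [Phi, liftS]
  simp only [liftVal_ne_nl π p s.1, if_false]
  simp only [unlift_lift]

lemma Phi_nlTT : Phi π p (nl π p, true, true) = stA π p := by simp [Phi]
lemma Phi_nlTF : Phi π p (nl π p, true, false) = FA π p := by simp [Phi]
lemma Phi_nlFT : Phi π p (nl π p, false, true) = FB π p := by simp [Phi]
lemma Phi_nlFF : Phi π p (nl π p, false, false) = stB π p := by simp [Phi]

lemma Psi_stA : Psi π p (stA π p) = (nl π p, true, true) := by simp [Psi]
lemma Psi_stB : Psi π p (stB π p) = (nl π p, false, false) := by
  rw [Psi, if_neg (Ne.symm (stA_ne_stB π p)), if_pos rfl]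
lemma Psi_other (s : Fin (m+1) × Bool × Bool) (h1 : s ≠ stA π p) (h2 : s ≠ stB π p) :
    Psi π p s = liftS π p s := by
  rw [Psi, if_neg h1, if_neg h2]

lemma state_cover (s' : Fin (m+1+1) × Bool × Bool) :
    (∃ v o, s' = (nl π p, v, o)) ∨ ∃ s, s' = liftS π p s := by
  obtain ⟨x, v, o⟩ := s'
  rcases val_cover π p x with h | ⟨e, h⟩
  · exact Or.inl ⟨v, o, by rw [h]⟩
  · exact Or.inr ⟨(e, v, o), by rw [h]; rfl⟩

lemma K1 (hπ : IsSP π) (hall : ∀ q, (π q).2 = true) (s' : Fin (m+1+1) × Bool × Bool) :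
    Quot.mk (fun x y => y = faceStep π x) (Phi π p (faceStep (addEdge π p) s')) =
    Quot.mk (fun x y => y = faceStep π x) (Phi π p s') := by
  have sound : ∀ t : Fin (m+1) × Bool × Bool,
      Quot.mk (fun x y => y = faceStep π x) t
        = Quot.mk (fun x y => y = faceStep π x) (faceStep π t) :=
    fun t => Quot.sound rfl
  rcases state_cover π p s' with ⟨v, o, rfl⟩ | ⟨s, rfl⟩
  · rcases v <;> rcases o
    · rw [N3 π p hπ hall, Phi_lift, if_pos rfl, Phi_nlFF]
    · rw [N4 π p hπ hall, Phi_lift, if_neg (FB_ne_stA π p), if_neg (FB_ne_stB π p), Phi_nlFT]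
    · rw [N2 π p hπ hall, Phi_lift, if_neg (FA_ne_stA π p), if_neg (FA_ne_stB π p), Phi_nlTF]
    · rw [N1 π p hπ hall, Phi_lift, if_neg (Ne.symm (stA_ne_stB π p)), if_pos rfl, Phi_nlTT]
  · rw [L1 π p hπ hall]
    by_cases h1 : s = stB π p
    · subst h1
      rw [if_pos rfl, Phi_nlTF, Phi_lift, if_neg (Ne.symm (stA_ne_stB π p)), if_pos rfl,
        ← faceStep_stA π p hπ hall]
      exact (sound _).symm
    · by_cases h2 : s = stA π p
      · subst h2
        rw [if_neg h1, if_pos rfl, Phi_nlFT, Phi_lift, if_pos rfl, ← faceStep_stB π p hall]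
        exact (sound _).symm
      · by_cases h3 : faceStep π s = stA π p
        · rw [if_neg h1, if_neg h2, if_pos h3, Phi_nlTT, Phi_lift, if_neg h2, if_neg h1, ← h3]
          exact (sound _).symm
        · by_cases h4 : faceStep π s = stB π p
          · rw [if_neg h1, if_neg h2, if_neg h3, if_pos h4, Phi_nlFF, Phi_lift, if_neg h2,
              if_neg h1, ← h4]
            exact (sound _).symm
          · rw [if_neg h1, if_neg h2, if_neg h3, if_neg h4, Phi_lift, if_neg h3, if_neg h4,
              Phi_lift, if_neg h2, if_neg h1]
            exact (sound _).symm

lemma K2 (hπ : IsSP π) (hall : ∀ q, (π q).2 = true) (s : Fin (m+1) × Bool × Bool) :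
    Quot.mk (fun x y => y = faceStep (addEdge π p) x) (Psi π p (faceStep π s)) =
    Quot.mk (fun x y => y = faceStep (addEdge π p) x) (Psi π p s) := by
  have sound : ∀ t : Fin (m+1+1) × Bool × Bool,
      Quot.mk (fun x y => y = faceStep (addEdge π p) x) t
        = Quot.mk (fun x y => y = faceStep (addEdge π p) x) (faceStep (addEdge π p) t) :=
    fun t => Quot.sound rfl
  by_cases h1 : s = stA π p
  · subst h1
    rw [faceStep_stA π p hπ hall, Psi_stA,
      Psi_other π p _ (FA_ne_stA π p) (FA_ne_stB π p)]
    have e1 := sound (nl π p, true, true)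
    rw [N1 π p hπ hall] at e1
    have e2 := sound (liftS π p (stB π p))
    rw [L1 π p hπ hall, if_pos rfl] at e2
    have e3 := sound (nl π p, true, false)
    rw [N2 π p hπ hall] at e3
    exact (e1.trans (e2.trans e3)).symm
  · by_cases h2 : s = stB π p
    · subst h2
      rw [faceStep_stB π p hall, Psi_stB,
        Psi_other π p _ (FB_ne_stA π p) (FB_ne_stB π p)]
      have e1 := sound (nl π p, false, false)
      rw [N3 π p hπ hall] at e1
      have e2 := sound (liftS π p (stA π p))
      rw [L1 π p hπ hall, if_neg (stA_ne_stB π p), if_pos rfl] at e2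
      have e3 := sound (nl π p, false, true)
      rw [N4 π p hπ hall] at e3
      exact (e1.trans (e2.trans e3)).symm
    · by_cases h3 : faceStep π s = stA π p
      · rw [h3, Psi_stA, Psi_other π p s h1 h2]
        have e := sound (liftS π p s)
        rw [L1 π p hπ hall, if_neg h2, if_neg h1, if_pos h3] at e
        exact e.symm
      · by_cases h4 : faceStep π s = stB π p
        · rw [h4, Psi_stB, Psi_other π p s h1 h2]
          have e := sound (liftS π p s)
          rw [L1 π p hπ hall, if_neg h2, if_neg h1, if_neg h3, if_pos h4] at e
          exact e.symm
        · rw [Psi_other π p _ h3 h4, Psi_other π p s h1 h2]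
          have e := sound (liftS π p s)
          rw [L1 π p hπ hall, if_neg h2, if_neg h1, if_neg h3, if_neg h4] at e
          exact e.symm

lemma K3 (s : Fin (m+1) × Bool × Bool) : Phi π p (Psi π p s) = s := by
  by_cases h1 : s = stA π p
  · subst h1; rw [Psi_stA, Phi_nlTT]
  · by_cases h2 : s = stB π p
    · subst h2; rw [Psi_stB, Phi_nlFF]
    · rw [Psi_other π p s h1 h2, Phi_lift, if_neg h1, if_neg h2]

lemma K4 (hπ : IsSP π) (hall : ∀ q, (π q).2 = true) (s' : Fin (m+1+1) × Bool × Bool) :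
    Quot.mk (fun x y => y = faceStep (addEdge π p) x) (Psi π p (Phi π p s')) =
    Quot.mk (fun x y => y = faceStep (addEdge π p) x) s' := by
  have sound : ∀ t : Fin (m+1+1) × Bool × Bool,
      Quot.mk (fun x y => y = faceStep (addEdge π p) x) t
        = Quot.mk (fun x y => y = faceStep (addEdge π p) x) (faceStep (addEdge π p) t) :=
    fun t => Quot.sound rfl
  rcases state_cover π p s' with ⟨v, o, rfl⟩ | ⟨s, rfl⟩
  · rcases v <;> rcases o
    · rw [Phi_nlFF, Psi_stB]
    · rw [Phi_nlFT, Psi_other π p _ (FB_ne_stA π p) (FB_ne_stB π p)]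
      have e := sound (nl π p, false, true)
      rw [N4 π p hπ hall] at e
      exact e.symm
    · rw [Phi_nlTF, Psi_other π p _ (FA_ne_stA π p) (FA_ne_stB π p)]
      have e := sound (nl π p, true, false)
      rw [N2 π p hπ hall] at e
      exact e.symm
    · rw [Phi_nlTT, Psi_stA]
  · rw [Phi_lift]
    by_cases h1 : s = stA π p
    · subst h1
      rw [if_pos rfl, Psi_stB]
      have e := sound (nl π p, false, false)
      rw [N3 π p hπ hall] at e
      exact e
    · by_cases h2 : s = stB π p
      · subst h2
        rw [if_neg (Ne.symm (stA_ne_stB π p)), if_pos rfl, Psi_stA]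
        have e := sound (nl π p, true, true)
        rw [N1 π p hπ hall] at e
        exact e
      · rw [if_neg h1, if_neg h2, Psi_other π p s h1 h2]

noncomputable def faceEquiv (hπ : IsSP π) (hall : ∀ q, (π q).2 = true) :
    Quot (fun x y : Fin (m+1+1) × Bool × Bool => y = faceStep (addEdge π p) x) ≃
    Quot (fun x y : Fin (m+1) × Bool × Bool => y = faceStep π x) where
  toFun := Quot.lift (fun s' => Quot.mk _ (Phi π p s'))
    (by
      intro a b hab
      rw [hab]
      exact (K1 π p hπ hall a).symm)
  invFun := Quot.lift (fun s => Quot.mk _ (Psi π p s))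
    (by
      intro a b hab
      rw [hab]
      exact (K2 π p hπ hall a).symm)
  left_inv := by
    apply Quot.ind
    intro s'
    exact K4 π p hπ hall s'
  right_inv := by
    apply Quot.ind
    intro s
    exact congrArg (Quot.mk _) (K3 π p s)

lemma numFaces_addEdge (hπ : IsSP π) (hall : ∀ q, (π q).2 = true) :
    numFaces (addEdge π p) = numFaces π := by
  unfold numFaces
  rw [Nat.card_congr (faceEquiv π p hπ hall)]

lemma liftVal_le_iff (u v : Fin (m+1)) : liftVal π p u ≤ liftVal π p v ↔ u ≤ v := by
  rw [Fin.le_def, Fin.le_def, liftVal_lt, liftVal_lt]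
  split_ifs <;> omega

lemma liftVal_lt_iff (u v : Fin (m+1)) : liftVal π p u < liftVal π p v ↔ u < v := by
  rw [Fin.lt_def, Fin.lt_def, liftVal_lt, liftVal_lt]
  split_ifs <;> omega

lemma posLift_le_iff (u v : Fin (m+1)) : posLift p u ≤ posLift p v ↔ u ≤ v := by
  rw [Fin.le_def, Fin.le_def, posLift_val, posLift_val]
  split_ifs <;> omega

lemma blockNeg (hall : ∀ q, (π q).2 = true) (a b : Fin (m+1+1))
    (hneg : IsNegBlock (addEdge π p) a b) : False := by
  obtain ⟨hab, hsig, hlt, -, -⟩ := hneg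
  have hfalse : ∀ k, a ≤ k → k ≤ b → k = pF p := by
    intro k h1 h2
    rcases posLift_cover p k with h | ⟨r, rfl⟩
    · exact h
    · have := hsig _ h1 h2
      rw [addEdge_posLift, hall r] at this
      exact absurd this (by simp)
  have ha := hfalse a le_rfl hab
  have hb := hfalse b hab le_rfl
  rw [ha, hb] at hlt
  exact lt_irrefl _ hlt

lemma blockPosCore (hπ : IsSP π) (hall : ∀ q, (π q).2 = true)
    (hnb : ¬ HasNontrivialBlock π) (a b : Fin (m+1+1))
    (hpos : IsPosBlock (addEdge π p) a b)
    (ra rb : Fin (m+1)) (hra : posLift p ra = a) (hrb : posLift p rb = b)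
    (hmid : ∀ r, ra ≤ r → r ≤ rb → a ≤ posLift p r ∧ posLift p r ≤ b)
    (hmem : ∀ k, a ≤ k → k ≤ b → ∃ r, posLift p r = k ∧ ra ≤ r ∧ r ≤ rb)
    (c : ℕ) (hshift : ∀ r, ra ≤ r → r ≤ rb → (posLift p r).1 = r.1 + c) :
    PosBlockSorted (addEdge π p) a b := by
  obtain ⟨hab, hsig, hlt, hrange, hcover⟩ := hpos
  have hfp := (π p).1.isLt
  have hvA : (addEdge π p a).1 = liftVal π p (π ra).1 := by
    rw [← hra, addEdge_posLift]
  have hvB : (addEdge π p b).1 = liftVal π p (π rb).1 := by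
    rw [← hrb, addEdge_posLift]
  -- p is not inside [a, b]
  have hpF : ¬(a ≤ pF p ∧ pF p ≤ b) := by
    rintro ⟨h1, h2⟩
    have := hsig (pF p) h1 h2
    rw [addEdge_pF] at this
    exact absurd this (by simp)
  -- the new label is not in the value range
  have hnl : ¬((addEdge π p a).1 ≤ nl π p ∧ nl π p ≤ (addEdge π p b).1) := by
    rintro ⟨h1, h2⟩
    obtain ⟨q, hq1, hq2, hq3⟩ := hcover (nl π p) h1 h2
    have hq : q = pF p := by
      apply addEdge_inj π p hπ
      show (addEdge π p q).1 = (addEdge π p (pF p)).1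
      rw [hq3, addEdge_pF]
    exact hpF ⟨hq ▸ hq1, hq ▸ hq2⟩
  -- the old interval [ra, rb] is a positive block of π
  have hblock : IsPosBlock π ra rb := by
    refine ⟨?_, fun k _ _ => hall k, ?_, ?_, ?_⟩
    · exact (posLift_le_iff p ra rb).1 (by rw [hra, hrb]; exact hab)
    · exact (liftVal_lt_iff π p _ _).1 (by rw [← hvA, ← hvB]; exact hlt)
    · intro k h1 h2
      have hm := hmid k h1 h2
      have hv : (addEdge π p (posLift p k)).1 = liftVal π p (π k).1 := by
        rw [addEdge_posLift]
      constructor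
      · exact (liftVal_le_iff π p _ _).1 (by rw [← hvA, ← hv]; exact (hrange _ hm.1 hm.2).1)
      · exact (liftVal_le_iff π p _ _).1 (by rw [← hvB, ← hv]; exact (hrange _ hm.1 hm.2).2)
    · intro w h1 h2
      obtain ⟨q, hq1, hq2, hq3⟩ := hcover (liftVal π p w)
        (by rw [hvA] at *; exact (liftVal_le_iff π p _ _).2 h1)
        (by rw [hvB] at *; exact (liftVal_le_iff π p _ _).2 h2)
      rcases posLift_cover p q with hq | ⟨r, rfl⟩
      · rw [hq, addEdge_pF] at hq3
        exact absurd hq3.symm (liftVal_ne_nl π p w)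
      · rw [addEdge_posLift] at hq3
        obtain ⟨r', hr'1, hr'2, hr'3⟩ := hmem (posLift p r) hq1 hq2
        have : r' = r := posLift_inj p hr'1
        subst this
        exact ⟨r', hr'2, hr'3, liftVal_inj π p hq3⟩
  have hsorted : PosBlockSorted π ra rb := by
    by_contra hns
    exact hnb ⟨ra, rb, Or.inl ⟨hblock, hns⟩⟩
  -- the values all lie on one side of f
  have hvava : (π ra).1 ≤ (π rb).1 := le_of_lt hblock.2.2.1
  have hfside : (π rb).1.1 ≤ (π p).1.1 ∨ (π p).1.1 + 1 ≤ (π ra).1.1 := by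
    have e1 : (addEdge π p a).1.1 =
        if (π ra).1.1 ≤ (π p).1.1 then (π ra).1.1 else (π ra).1.1 + 1 := by
      rw [hvA, liftVal_lt]
    have e2 : (addEdge π p b).1.1 =
        if (π rb).1.1 ≤ (π p).1.1 then (π rb).1.1 else (π rb).1.1 + 1 := by
      rw [hvB, liftVal_lt]
    have e3 : ¬((addEdge π p a).1.1 ≤ (π p).1.1 + 1 ∧ (π p).1.1 + 1 ≤ (addEdge π p b).1.1) := by
      rintro ⟨h1, h2⟩
      exact hnl ⟨h1, h2⟩
    rw [Fin.le_def] at hvava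
    split_ifs at e1 e2 <;> omega
  -- conclude sortedness of the new block
  intro k h1 h2
  obtain ⟨r, hrk, hr1, hr2⟩ := hmem k h1 h2
  have ek : (addEdge π p k).1.1 =
      if (π r).1.1 ≤ (π p).1.1 then (π r).1.1 else (π r).1.1 + 1 := by
    rw [← hrk, addEdge_posLift, liftVal_lt]
  have ea : (addEdge π p a).1.1 =
      if (π ra).1.1 ≤ (π p).1.1 then (π ra).1.1 else (π ra).1.1 + 1 := by
    rw [hvA, liftVal_lt]
  have hsr := hsorted r hr1 hr2
  have hbound := hblock.2.2.2.1 r hr1 hr2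
  rw [Fin.le_def] at hbound hvava
  have hka : k.1 = r.1 + c := by rw [← hrk]; exact hshift r hr1 hr2
  have haa : a.1 = ra.1 + c := by rw [← hra]; exact hshift ra le_rfl hblock.1
  have hra1 : ra.1 ≤ r.1 := hr1
  rcases hfside with hs | hs <;> (split_ifs at ek ea <;> omega)

lemma blockPos (hπ : IsSP π) (hall : ∀ q, (π q).2 = true)
    (hnb : ¬ HasNontrivialBlock π) (a b : Fin (m+1+1))
    (hpos : IsPosBlock (addEdge π p) a b) : PosBlockSorted (addEdge π p) a b := by
  have hab := hpos.1
  have hpF : ¬(a ≤ pF p ∧ pF p ≤ b) := by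
    rintro ⟨h1, h2⟩
    have := hpos.2.1 (pF p) h1 h2
    rw [addEdge_pF] at this
    exact absurd this (by simp)
  have hb := b.isLt
  have ha := a.isLt
  have hp := p.isLt
  rw [Fin.le_def] at hab
  have hside : b.1 < p.1 ∨ p.1 < a.1 := by
    by_contra hcon
    push_neg at hcon
    exact hpF ⟨by rw [Fin.le_def]; show a.1 ≤ p.1; omega,
      by rw [Fin.le_def]; show p.1 ≤ b.1; omega⟩
  rcases hside with hs | hs
  · refine blockPosCore π p hπ hall hnb a b hpos ⟨a.1, by omega⟩ ⟨b.1, by omega⟩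
      (Fin.ext (by rw [posLift_val]; simp only []; rw [if_pos (by omega)]))
      (Fin.ext (by rw [posLift_val]; simp only []; rw [if_pos (by omega)]))
      ?_ ?_ 0 ?_
    · intro r h1 h2
      rw [Fin.le_def] at h1 h2
      simp only [] at h1 h2
      constructor <;> (rw [Fin.le_def, posLift_val]; split_ifs <;> omega)
    · intro k h1 h2
      rw [Fin.le_def] at h1 h2
      refine ⟨⟨k.1, by omega⟩, Fin.ext (by rw [posLift_val]; simp only []; rw [if_pos (by omega)]),
        ?_, ?_⟩ <;> (rw [Fin.le_def]; simp only []; omega)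
    · intro r h1 h2
      rw [Fin.le_def] at h1 h2
      simp only [] at h1 h2
      rw [posLift_val]
      split_ifs <;> omega
  · refine blockPosCore π p hπ hall hnb a b hpos ⟨a.1 - 1, by omega⟩ ⟨b.1 - 1, by omega⟩
      (Fin.ext (by rw [posLift_val]; simp only []; rw [if_neg (by omega)]; omega))
      (Fin.ext (by rw [posLift_val]; simp only []; rw [if_neg (by omega)]; omega))
      ?_ ?_ 1 ?_
    · intro r h1 h2
      rw [Fin.le_def] at h1 h2
      simp only [] at h1 h2
      constructor <;> (rw [Fin.le_def, posLift_val]; split_ifs <;> omega)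
    · intro k h1 h2
      rw [Fin.le_def] at h1 h2
      refine ⟨⟨k.1 - 1, by omega⟩,
        Fin.ext (by rw [posLift_val]; simp only []; rw [if_neg (by omega)]; omega),
        ?_, ?_⟩ <;> (rw [Fin.le_def]; simp only []; omega)
    · intro r h1 h2
      rw [Fin.le_def] at h1 h2
      simp only [] at h1 h2
      rw [posLift_val]
      split_ifs <;> omega

lemma noBlock_addEdge (hπ : IsSP π) (hall : ∀ q, (π q).2 = true)
    (hnb : ¬ HasNontrivialBlock π) : ¬ HasNontrivialBlock (addEdge π p) := by
  rintro ⟨a, b, ⟨hpos, hns⟩ | ⟨hneg, -⟩⟩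
  · exact hns (blockPos π p hπ hall hnb a b hpos)
  · exact blockNeg π p hall a b hneg

end Main

end AE

/-- Let `G` be an orientable loopless 2-vertex embedding scheme (all signatures
positive) with no non-trivial block and nonzero Euler genus. Adding one negative edge
parallel and consecutive to an existing edge yields a non-orientable scheme `G'` with
the same number of faces, hence `eg(G') = eg(G) + 1` and non-orientable genus
`g(G') = eg(G) + 1 = g(G)`; moreover `G'` has no non-trivial block. -/
theorem addEdge_nonorientable {n : ℕ} (π : SP n) (hπ : IsSP π)
    (hall : ∀ q, (π q).2 = true) (hnoblock : ¬ HasNontrivialBlock π)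
    (hg : eulerGenus π ≠ 0) (p : Fin n) :
    (∃ q, (addEdge π p q).2 = false) ∧
    numFaces (addEdge π p) = numFaces π ∧
    eulerGenus (addEdge π p) = eulerGenus π + 1 ∧
    nonOrientGenus (addEdge π p) = eulerGenus π + 1 ∧
    nonOrientGenus (addEdge π p) = nonOrientGenus π ∧
    ¬ HasNontrivialBlock (addEdge π p) := by
  rcases n with _ | m
  · exact p.elim0
  have hfaces : numFaces (addEdge π p) = numFaces π := AE.numFaces_addEdge π p hπ hall
  have hex : ∃ q, (addEdge π p q).2 = false := ⟨AE.pF p, by rw [AE.addEdge_pF]⟩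
  have hgenus : eulerGenus (addEdge π p) = eulerGenus π + 1 := by
    unfold eulerGenus
    rw [hfaces]
    push_cast
    ring
  have hnon' : nonOrientGenus (addEdge π p) = eulerGenus π + 1 := by
    unfold nonOrientGenus
    rw [if_pos hex, hgenus]
  have hnonπ : nonOrientGenus π = eulerGenus π + 1 := by
    unfold nonOrientGenus
    rw [if_neg (by rintro ⟨q, hq⟩; rw [hall q] at hq; exact absurd hq (by simp)), if_neg hg]
  exact ⟨hex, hfaces, hgenus, hnon', by rw [hnon', hnonπ],
    AE.noBlock_addEdge π p hπ hall hnoblock⟩
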